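/- Let U and U₀ be unitary operators on a separable Hilbert space 𝓗 with U − U₀ trace class, and set W_t = U^{−t}U₀^{t} for t ∈ ℕ. Then for all t, s ∈ ℕ with t ≠ s, s-lim_{r→∞} (W_t − W_s) U₀^{r} Π_ac(U₀) = 0. -/

import Mathlib

set_option maxHeartbeats 1000000


noncomputable section
open MeasureTheory Filter Topology Complex

/-- A bounded operator on a Hilbert space is trace class iff it admits a nuclear
representation `T = ∑ₙ |aₙ⟩⟨bₙ|` with `∑ₙ ‖aₙ‖‖bₙ‖ < ∞` (in a Hilbert space this is
equivalent to `Tr |T| < ∞`). -/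
def IsTraceClass {E : Type*} [NormedAddCommGroup E] [InnerProductSpace ℂ E]
    (T : E →L[ℂ] E) : Prop :=
  ∃ a b : ℕ → E, Summable (fun n => ‖a n‖ * ‖b n‖) ∧
    ∀ ψ, T ψ = ∑' n, (inner ℂ (b n) ψ : ℂ) • a n

/-- `μ` is the spectral measure of the unitary `U` at the vector `ψ`, i.e. the finite
Borel measure on `[0,2π)` with `⟨ψ, Uᵗψ⟩ = ∫ e^{itλ} dμ(λ)` for all `t ∈ ℤ`. -/
def IsVectorSpectralMeasure {E : Type*} [NormedAddCommGroup E] [InnerProductSpace ℂ E]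
    [CompleteSpace E] (U : unitary (E →L[ℂ] E)) (ψ : E) (μ : Measure ℝ) : Prop :=
  IsFiniteMeasure μ ∧ μ (Set.Ico 0 (2 * Real.pi))ᶜ = 0 ∧
    ∀ t : ℤ, (inner ℂ ψ (((U ^ t : unitary (E →L[ℂ] E)) : E →L[ℂ] E) ψ) : ℂ)
      = ∫ l, Complex.exp (Complex.I * t * l) ∂μ

/-- `ψ` belongs to the subspace of absolute continuity of the unitary `U`:
its spectral measure is absolutely continuous w.r.t. Lebesgue measure. -/
def IsAcVector {E : Type*} [NormedAddCommGroup E] [InnerProductSpace ℂ E]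
    [CompleteSpace E] (U : unitary (E →L[ℂ] E)) (ψ : E) : Prop :=
  ∃ μ : Measure ℝ, IsVectorSpectralMeasure U ψ μ ∧ μ ≪ volume

/-- `P` is the orthogonal projection of a Hilbert space onto the set `S`
(which is required to be its fixed-point set). -/
def IsOrthoProjOnto {E : Type*} [NormedAddCommGroup E] [InnerProductSpace ℂ E]
    [CompleteSpace E] (P : E →L[ℂ] E) (S : Set E) : Prop :=
  IsSelfAdjoint P ∧ P.comp P = P ∧ ∀ ψ, (P ψ = ψ ↔ ψ ∈ S)
variable {E : Type*} [NormedAddCommGroup E] [InnerProductSpace ℂ E]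
  [CompleteSpace E] [TopologicalSpace.SeparableSpace E]


lemma rl_ac (μ : Measure ℝ) [IsFiniteMeasure μ] (hac : μ ≪ volume) :
    Tendsto (fun w : ℝ => ∫ l, Complex.exp (Complex.I * w * l) ∂μ) (cocompact ℝ) (𝓝 0) := by
  have key := Real.tendsto_integral_exp_smul_cocompact
    (fun v : ℝ => ((μ.rnDeriv volume v).toReal : ℂ))
  have hπ : (2 * Real.pi : ℝ) ≠ 0 := by positivity
  have hmap : Tendsto (fun w : ℝ => -w * (2 * Real.pi)⁻¹) (cocompact ℝ) (cocompact ℝ) :=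
    ((Homeomorph.neg ℝ).trans (Homeomorph.mulRight₀ _ (inv_ne_zero hπ))).map_cocompact.le
  have := key.comp hmap
  convert this using 2 with w
  rw [← MeasureTheory.integral_rnDeriv_smul hac
    (f := fun l : ℝ => Complex.exp (Complex.I * w * l))]
  simp only [Function.comp]
  congr 1
  ext v
  rw [Circle.smul_def, Real.fourierChar_apply, real_smul]
  rw [mul_comm]
  congr 1
  push_cast
  have hπc : (Real.pi : ℂ) ≠ 0 := by exact_mod_cast Real.pi_ne_zero
  field_simp
  try ring_nf
  try ring

lemma tendsto_inner_unitary_pow_ac (U0 : unitary (E →L[ℂ] E)) (φ : E)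
    (hφ : IsAcVector U0 φ) (b : E) :
    Tendsto (fun r : ℕ => (inner ℂ b ((((U0 ^ r : unitary (E →L[ℂ] E))) : E →L[ℂ] E) φ) : ℂ))
      atTop (𝓝 0) := by
  obtain ⟨μ, ⟨hfin, -, hspec⟩, hac⟩ := hφ
  haveI := hfin
  -- Riemann-Lebesgue for the diagonal matrix elements
  have hRL : ∀ k : ℤ, Tendsto
      (fun r : ℕ => (inner ℂ φ ((((U0 ^ ((r : ℤ) - k) : unitary (E →L[ℂ] E))) : E →L[ℂ] E) φ) : ℂ))
      atTop (𝓝 0) := by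
    intro k
    have hw : Tendsto (fun r : ℕ => ((r : ℝ) - k)) atTop (cocompact ℝ) := by
      have hle : (atTop : Filter ℝ) ≤ cocompact ℝ := by
        rw [cocompact_eq_atBot_atTop]; exact le_sup_right
      exact Tendsto.mono_right ((tendsto_atTop_add_const_right _ (-(k:ℝ))
        tendsto_natCast_atTop_atTop).congr (fun r => (sub_eq_add_neg _ _).symm)) hle
    have h2 := (rl_ac μ hac).comp hw
    simp only [hspec]
    convert h2 using 2 with r
    simp only [Function.comp]
    congr 1
    ext l
    congr 1
    push_cast
    ring
  -- span generators
  set S : Set E := Set.range (fun k : ℤ => (((U0 ^ k : unitary (E →L[ℂ] E)) : E →L[ℂ] E)) φ)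
    with hS
  -- key inner ℂ product identity
  have hgen : ∀ (k : ℤ) (r : ℕ),
      (inner ℂ ((((U0 ^ k : unitary (E →L[ℂ] E))) : E →L[ℂ] E) φ)
        ((((U0 ^ r : unitary (E →L[ℂ] E))) : E →L[ℂ] E) φ) : ℂ)
      = (inner ℂ φ ((((U0 ^ ((r : ℤ) - k) : unitary (E →L[ℂ] E))) : E →L[ℂ] E) φ) : ℂ) := by
    intro k r
    have hsplit : (U0 ^ r : unitary (E →L[ℂ] E)) = U0 ^ k * U0 ^ ((r : ℤ) - k) := by
      rw [← zpow_natCast U0 r, ← zpow_add]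
      ring_nf
    rw [hsplit]
    rw [Submonoid.coe_mul, ContinuousLinearMap.mul_apply]
    exact Unitary.inner_map_map (U0 ^ k) _ _
  -- the claim for elements of the span
  have claim1 : ∀ b' ∈ Submodule.span ℂ S,
      Tendsto (fun r : ℕ =>
        (inner ℂ b' ((((U0 ^ r : unitary (E →L[ℂ] E))) : E →L[ℂ] E) φ) : ℂ)) atTop (𝓝 0) := by
    intro b' hb'
    induction hb' using Submodule.span_induction with
    | mem x hx =>
      obtain ⟨k, rfl⟩ := hx
      simpa only [hgen k] using hRL k
    | zero => simpa using tendsto_const_nhds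
    | add x y _ _ hx hy => simpa [inner_add_left] using hx.add hy
    | smul c x _ hx =>
      simp only [inner_smul_left]
      simpa using hx.const_mul (starRingEnd ℂ c)
  set M := (Submodule.span ℂ S).topologicalClosure with hM
  haveI : CompleteSpace M := (Submodule.isClosed_topologicalClosure _).completeSpace_coe
  have claim2 : ∀ b' ∈ M,
      Tendsto (fun r : ℕ =>
        (inner ℂ b' ((((U0 ^ r : unitary (E →L[ℂ] E))) : E →L[ℂ] E) φ) : ℂ)) atTop (𝓝 0) := by
    intro b' hb'
    rw [tendsto_zero_iff_norm_tendsto_zero]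
    rw [Metric.tendsto_atTop]
    intro ε hε
    have hb'' : b' ∈ closure ((Submodule.span ℂ S : Set E)) := hb'
    obtain ⟨y, hy, hdist⟩ := Metric.mem_closure_iff.mp hb''
      (ε / (2 * (‖φ‖ + 1))) (by positivity)
    have h1 := claim1 y hy
    rw [tendsto_zero_iff_norm_tendsto_zero, Metric.tendsto_atTop] at h1
    obtain ⟨N, hN⟩ := h1 (ε/2) (by positivity)
    refine ⟨N, fun r hr => ?_⟩
    have hN' := hN r hr
    simp only [Real.dist_eq, sub_zero, abs_norm] at hN' ⊢
    have hx : ‖(((U0 ^ r : unitary (E →L[ℂ] E))) : E →L[ℂ] E) φ‖ = ‖φ‖ :=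
      Unitary.norm_map _ _
    have hsplit : (inner ℂ b' ((((U0 ^ r : unitary (E →L[ℂ] E))) : E →L[ℂ] E) φ) : ℂ)
        = inner ℂ (b' - y) ((((U0 ^ r : unitary (E →L[ℂ] E))) : E →L[ℂ] E) φ)
          + inner ℂ y ((((U0 ^ r : unitary (E →L[ℂ] E))) : E →L[ℂ] E) φ) := by
      rw [inner_sub_left]; ring
    rw [hsplit]
    have hb1 : ‖(inner ℂ (b' - y) ((((U0 ^ r : unitary (E →L[ℂ] E))) : E →L[ℂ] E) φ) : ℂ)‖
        ≤ ‖b' - y‖ * ‖φ‖ := by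
      have := norm_inner_le_norm (𝕜 := ℂ) (b' - y)
        ((((U0 ^ r : unitary (E →L[ℂ] E))) : E →L[ℂ] E) φ)
      rwa [hx] at this
    have hby : ‖b' - y‖ < ε / (2 * (‖φ‖ + 1)) := by
      rw [← dist_eq_norm]; exact hdist
    have h2 : ‖b' - y‖ * ‖φ‖ < ε / 2 := by
      have hφ1 : ‖φ‖ < ‖φ‖ + 1 := by linarith
      have h0 : (0:ℝ) < ‖φ‖ + 1 := by positivity
      calc ‖b' - y‖ * ‖φ‖ ≤ ‖b' - y‖ * (‖φ‖ + 1) := by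
            exact mul_le_mul_of_nonneg_left (by linarith) (norm_nonneg _)
        _ < (ε / (2 * (‖φ‖ + 1))) * (‖φ‖ + 1) := by
            exact mul_lt_mul_of_pos_right hby h0
        _ = ε / 2 := by field_simp
    calc ‖_ + _‖ ≤ _ + _ := norm_add_le _ _
      _ < ε/2 + ε/2 := by
          refine add_lt_add_of_le_of_lt (le_trans hb1 h2.le) ?_
          simpa using hN'
      _ = ε := by ring
  -- every power of U0 applied to φ lies in M
  have hmem : ∀ r : ℕ, (((U0 ^ r : unitary (E →L[ℂ] E))) : E →L[ℂ] E) φ ∈ M := by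
    intro r
    apply Submodule.le_topologicalClosure
    apply Submodule.subset_span
    exact ⟨(r : ℤ), by simp [zpow_natCast]⟩
  set Pb : E := (M.orthogonalProjection b : E) with hPb
  have hproj : ∀ r : ℕ,
      (inner ℂ b ((((U0 ^ r : unitary (E →L[ℂ] E))) : E →L[ℂ] E) φ) : ℂ)
      = inner ℂ Pb ((((U0 ^ r : unitary (E →L[ℂ] E))) : E →L[ℂ] E) φ) := by
    intro r
    have horth : b - Pb ∈ Mᗮ := M.sub_starProjection_mem_orthogonal b
    have h0 : (inner ℂ (b - Pb) ((((U0 ^ r : unitary (E →L[ℂ] E))) : E →L[ℂ] E) φ) : ℂ) = 0 :=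
      Submodule.inner_left_of_mem_orthogonal (hmem r) horth
    rw [inner_sub_left] at h0
    linear_combination h0
  simp only [hproj]
  exact claim2 Pb (SetLike.coe_mem _)

lemma tendsto_tc_apply_pow_ac (U0 : unitary (E →L[ℂ] E)) (T : E →L[ℂ] E)
    (hT : ∃ a b : ℕ → E, Summable (fun n => ‖a n‖ * ‖b n‖) ∧
      ∀ ψ, T ψ = ∑' n, (inner ℂ (b n) ψ : ℂ) • a n)
    (φ : E) (hφ : IsAcVector U0 φ) :
    Tendsto (fun r : ℕ => T ((((U0 ^ r : unitary (E →L[ℂ] E))) : E →L[ℂ] E) φ)) atTop (𝓝 0) := by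
  obtain ⟨a, bb, hsum, hrep⟩ := hT
  simp only [hrep]
  have hbd : Summable (fun n => ‖a n‖ * ‖bb n‖ * ‖φ‖) := hsum.mul_right _
  have key := tendsto_tsum_of_dominated_convergence (𝓕 := (atTop : Filter ℕ))
    (f := fun r n => (inner ℂ (bb n) ((((U0 ^ r : unitary (E →L[ℂ] E))) : E →L[ℂ] E) φ) : ℂ) • a n)
    (g := fun n => (0 : E)) (bound := fun n => ‖a n‖ * ‖bb n‖ * ‖φ‖) hbd
    (fun n => by
      simpa using (tendsto_inner_unitary_pow_ac U0 φ hφ (bb n)).smul_const (a n))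
    (by
      filter_upwards with r n
      rw [norm_smul]
      have h1 : ‖(inner ℂ (bb n) ((((U0 ^ r : unitary (E →L[ℂ] E))) : E →L[ℂ] E) φ) : ℂ)‖
          ≤ ‖bb n‖ * ‖φ‖ := by
        have := norm_inner_le_norm (𝕜 := ℂ) (bb n)
          ((((U0 ^ r : unitary (E →L[ℂ] E))) : E →L[ℂ] E) φ)
        rwa [Unitary.norm_map] at this
      calc ‖(inner ℂ (bb n) ((((U0 ^ r : unitary (E →L[ℂ] E))) : E →L[ℂ] E) φ) : ℂ)‖ * ‖a n‖
          ≤ (‖bb n‖ * ‖φ‖) * ‖a n‖ := by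
            exact mul_le_mul_of_nonneg_right h1 (norm_nonneg _)
        _ = ‖a n‖ * ‖bb n‖ * ‖φ‖ := by ring)
  simpa using key

lemma step_identity (U U0 : unitary (E →L[ℂ] E)) (k : ℕ) (x : E) :
    ((((U ^ (k+1))⁻¹ * U0 ^ (k+1) : unitary (E →L[ℂ] E))) : E →L[ℂ] E) x
      - ((((U ^ k)⁻¹ * U0 ^ k : unitary (E →L[ℂ] E))) : E →L[ℂ] E) x
    = (((U ^ (k+1))⁻¹ : unitary (E →L[ℂ] E)) : E →L[ℂ] E)
        (((U0 : E →L[ℂ] E) - (U : E →L[ℂ] E)) ((((U0 ^ k : unitary (E →L[ℂ] E))) : E →L[ℂ] E) x)) := by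
  have h1 : (U0 ^ (k+1) : unitary (E →L[ℂ] E)) = U0 * U0 ^ k := pow_succ' U0 k
  have h2 : ((U ^ k)⁻¹ : unitary (E →L[ℂ] E)) = (U ^ (k+1))⁻¹ * U := by
    rw [pow_succ' U k, mul_inv_rev, inv_mul_cancel_right]
  rw [h1, h2]
  simp only [Submonoid.coe_mul, ContinuousLinearMap.mul_apply, ContinuousLinearMap.sub_apply,
    map_sub, ContinuousLinearMap.mul_def, ContinuousLinearMap.comp_apply]

/-- Lemma 3.4: with `W_t = U^{-t}U₀^t`,
`s-lim_{r→∞} (W_t − W_s) U₀^r Π_ac(U₀) = 0`. -/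
theorem Wt_diff_slim_zero_on_ac
    (U U0 : unitary (E →L[ℂ] E))
    (hT : IsTraceClass ((U : E →L[ℂ] E) - (U0 : E →L[ℂ] E)))
    (Pac0 : E →L[ℂ] E) (hPac0 : IsOrthoProjOnto Pac0 {ψ : E | IsAcVector U0 ψ})
    (t s : ℕ) (hts : t ≠ s) :
    ∀ ψ : E, Tendsto
      (fun r : ℕ =>
        (((((U ^ t)⁻¹ * U0 ^ t) : unitary (E →L[ℂ] E)) : E →L[ℂ] E) - ((((U ^ s)⁻¹ * U0 ^ s) : unitary (E →L[ℂ] E)) : E →L[ℂ] E))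
          ((((U0 ^ r) : unitary (E →L[ℂ] E)) : E →L[ℂ] E) (Pac0 ψ)))
      atTop (𝓝 0) := by
  obtain ⟨hsa, hidem, hiff⟩ := hPac0
  intro ψ
  set φ := Pac0 ψ with hφdef
  have hfix : Pac0 φ = φ := by
    have := congrArg (fun A : E →L[ℂ] E => A ψ) hidem
    simpa [ContinuousLinearMap.comp_apply] using this
  have hac : IsAcVector U0 φ := (hiff φ).mp hfix
  have hTd : Tendsto (fun r : ℕ =>
      ((U : E →L[ℂ] E) - (U0 : E →L[ℂ] E)) ((((U0 ^ r : unitary (E →L[ℂ] E))) : E →L[ℂ] E) φ))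
      atTop (𝓝 0) := tendsto_tc_apply_pow_ac U0 _ hT φ hac
  -- single step
  have hstep : ∀ k : ℕ, Tendsto (fun r : ℕ =>
      ((((U ^ (k+1))⁻¹ * U0 ^ (k+1) : unitary (E →L[ℂ] E))) : E →L[ℂ] E)
        ((((U0 ^ r : unitary (E →L[ℂ] E))) : E →L[ℂ] E) φ)
      - ((((U ^ k)⁻¹ * U0 ^ k : unitary (E →L[ℂ] E))) : E →L[ℂ] E)
        ((((U0 ^ r : unitary (E →L[ℂ] E))) : E →L[ℂ] E) φ)) atTop (𝓝 0) := by
    intro k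
    have hshift : Tendsto (fun r : ℕ =>
        ((U : E →L[ℂ] E) - (U0 : E →L[ℂ] E))
          ((((U0 ^ (k + r) : unitary (E →L[ℂ] E))) : E →L[ℂ] E) φ)) atTop (𝓝 0) := by
      have hm : Tendsto (fun r : ℕ => k + r) atTop atTop := by
        simpa [add_comm] using tendsto_add_atTop_nat k
      exact hTd.comp hm
    have hA := ((((U ^ (k+1))⁻¹ : unitary (E →L[ℂ] E)) : E →L[ℂ] E).continuous.tendsto 0)
    rw [map_zero] at hA
    have hsn := hshift.neg
    rw [neg_zero] at hsn
    have hfin := hA.comp hsn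
    have heq : ∀ r : ℕ,
        ((((U ^ (k+1))⁻¹ * U0 ^ (k+1) : unitary (E →L[ℂ] E))) : E →L[ℂ] E)
          ((((U0 ^ r : unitary (E →L[ℂ] E))) : E →L[ℂ] E) φ)
        - ((((U ^ k)⁻¹ * U0 ^ k : unitary (E →L[ℂ] E))) : E →L[ℂ] E)
          ((((U0 ^ r : unitary (E →L[ℂ] E))) : E →L[ℂ] E) φ)
        = (((U ^ (k+1))⁻¹ : unitary (E →L[ℂ] E)) : E →L[ℂ] E)
            (-(((U : E →L[ℂ] E) - (U0 : E →L[ℂ] E))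
              ((((U0 ^ (k + r) : unitary (E →L[ℂ] E))) : E →L[ℂ] E) φ))) := by
      intro r
      rw [step_identity U U0 k]
      have harg : (((U0 ^ k : unitary (E →L[ℂ] E))) : E →L[ℂ] E)
          ((((U0 ^ r : unitary (E →L[ℂ] E))) : E →L[ℂ] E) φ)
          = (((U0 ^ (k + r) : unitary (E →L[ℂ] E))) : E →L[ℂ] E) φ := by
        rw [pow_add]
        simp [ContinuousLinearMap.mul_apply]
      rw [harg]
      congr 1
      simp [ContinuousLinearMap.sub_apply, neg_sub]
    exact hfin.congr (fun r => (heq r).symm)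
  simp only [ContinuousLinearMap.sub_apply]
  have main : ∀ d s' : ℕ, Tendsto (fun r : ℕ =>
      ((((U ^ (s'+d))⁻¹ * U0 ^ (s'+d) : unitary (E →L[ℂ] E))) : E →L[ℂ] E)
        ((((U0 ^ r : unitary (E →L[ℂ] E))) : E →L[ℂ] E) φ)
      - ((((U ^ s')⁻¹ * U0 ^ s' : unitary (E →L[ℂ] E))) : E →L[ℂ] E)
        ((((U0 ^ r : unitary (E →L[ℂ] E))) : E →L[ℂ] E) φ)) atTop (𝓝 0) := by
    intro d
    induction d with
    | zero => intro s'; simp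
    | succ d ih =>
        intro s'
        have h1 := hstep (s' + d)
        have h2 := ih s'
        have h3 := h1.add h2
        rw [add_zero] at h3
        refine h3.congr (fun r => ?_)
        show _ = ((((U ^ (s'+(d+1)))⁻¹ * U0 ^ (s'+(d+1)) : unitary (E →L[ℂ] E))) : E →L[ℂ] E) _ - _
        have hsd : s' + (d + 1) = (s' + d) + 1 := by omega
        rw [hsd]
        abel
  rcases lt_or_gt_of_ne hts with h | h
  · have hm := (main (s - t) t).neg
    rw [Nat.add_sub_cancel' h.le, neg_zero] at hm
    refine hm.congr (fun r => ?_)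
    abel
  · have hm := main (t - s) s
    rw [Nat.add_sub_cancel' h.le] at hm
    exact hm
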